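/- Let p be an odd prime and m an integer with 1 < m < p, and let f : ZMod p → ZMod p. Then f is a bijection satisfying f(m·a + (1−m)·b) = m·f(a) + (1−m)·f(b) for all a, b ∈ ZMod p if and only if there exist a nonzero λ ∈ ZMod p and μ ∈ ZMod p such that f(x) = λ·x + μ for all x ∈ ZMod p. In other words, the automorphism group of the linear Alexander quandle LAQ(p,m) is exactly the affine group of ZMod p; in particular it depends only on p and not on m. -/

import Mathlib

/-- For an odd prime `p` and an integer `m` with `1 < m < p`, a map
`f : ZMod p → ZMod p` is a quandle automorphism of the linear Alexander quandle
`LAQ(p, m)` (a bijection with `f(m·a + (1−m)·b) = m·f(a) + (1−m)·f(b)` for all `a, b`)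
if and only if `f` is an affine map `x ↦ l·x + μ` with `l ≠ 0`. -/
theorem laq_automorphism_iff_affine (p : ℕ) (hp : p.Prime) (hodd : Odd p)
    (m : ℤ) (hm1 : 1 < m) (hmp : m < p)
    (f : ZMod p → ZMod p) :
    (Function.Bijective f ∧
      ∀ a b : ZMod p, f ((m : ZMod p) * a + (1 - (m : ZMod p)) * b) =
        (m : ZMod p) * f a + (1 - (m : ZMod p)) * f b) ↔
    ∃ (l μ : ZMod p), l ≠ 0 ∧ ∀ x : ZMod p, f x = l * x + μ := by
  haveI : Fact p.Prime := ⟨hp⟩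
  have hp1 : 1 < p := hp.one_lt
  have hm0 : (m : ZMod p) ≠ 0 := by
    rw [Ne, ZMod.intCast_zmod_eq_zero_iff_dvd]
    intro h
    have := Int.le_of_dvd (by omega) h
    omega
  have hm1' : (m : ZMod p) ≠ 1 := by
    intro h
    have h2 : ((m - 1 : ℤ) : ZMod p) = 0 := by push_cast; rw [h]; ring
    rw [ZMod.intCast_zmod_eq_zero_iff_dvd] at h2
    have := Int.le_of_dvd (by omega) h2
    omega
  set c : ZMod p := (m : ZMod p) with hc
  have h1c : (1 : ZMod p) - c ≠ 0 := sub_ne_zero.mpr (Ne.symm hm1')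
  constructor
  · rintro ⟨hbij, heq⟩
    -- additivity of g x := f x - f 0
    have hadd : ∀ u v : ZMod p, f (u + v) - f 0 = (f u - f 0) + (f v - f 0) := by
      intro u v
      have key := heq (c⁻¹ * u) ((1 - c)⁻¹ * v)
      have e1 : c * (c⁻¹ * u) = u := by
        rw [← mul_assoc, mul_inv_cancel₀ hm0, one_mul]
      have e2 : (1 - c) * ((1 - c)⁻¹ * v) = v := by
        rw [← mul_assoc, mul_inv_cancel₀ h1c, one_mul]
      rw [e1, e2] at key
      have ha := heq (c⁻¹ * u) 0
      rw [e1, mul_zero, add_zero] at ha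
      have hb := heq 0 ((1 - c)⁻¹ * v)
      rw [e2, mul_zero, zero_add] at hb
      -- key : f (u + v) = c * f (c⁻¹ * u) + (1 - c) * f ((1-c)⁻¹ * v)
      -- ha : f u = c * f (c⁻¹ * u) + (1 - c) * f 0
      -- hb : f v = c * f 0 + (1 - c) * f ((1-c)⁻¹ * v)
      have : f (u + v) = f u + f v - f 0 := by
        rw [key, ha, hb]; ring
      rw [this]; ring
    let G : ZMod p →+ ZMod p :=
      { toFun := fun x => f x - f 0
        map_zero' := by simp
        map_add' := hadd }
    have hlin : ∀ x : ZMod p, f x - f 0 = x * (f 1 - f 0) := by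
      intro x
      have hx : ((x.val : ℕ) : ZMod p) = x := ZMod.natCast_rightInverse x
      calc f x - f 0 = G x := rfl
        _ = G (x.val • (1 : ZMod p)) := by rw [nsmul_eq_mul, mul_one, hx]
        _ = x.val • G 1 := AddMonoidHom.map_nsmul G x.val 1
        _ = ((x.val : ℕ) : ZMod p) * G 1 := by rw [nsmul_eq_mul]
        _ = x * (f 1 - f 0) := by rw [hx]; rfl
    refine ⟨f 1 - f 0, f 0, ?_, ?_⟩
    · intro h
      have : f 1 = f 0 := sub_eq_zero.mp h
      have h10 : (1 : ZMod p) = 0 := hbij.injective this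
      exact one_ne_zero h10
    · intro x
      have := hlin x
      linear_combination this
  · rintro ⟨l, μ, hl, hf⟩
    constructor
    · constructor
      · intro x y hxy
        rw [hf, hf] at hxy
        have : l * x = l * y := by linear_combination hxy
        exact mul_left_cancel₀ hl this
      · intro y
        refine ⟨l⁻¹ * (y - μ), ?_⟩
        rw [hf, ← mul_assoc, mul_inv_cancel₀ hl, one_mul]
        ring
    · intro a b
      simp only [hf]
      ring
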